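/- For real numbers l and a with 0 < a < l, the integral ∫_{0}^{π} min(a, l·|cos φ|) dφ equals 2l·(1 − √(1 − a²/l²)) + 2a·arccos(a/l). -/
import Mathlib


open Real MeasureTheory Filter

/-- `A(l,a) = ∫_0^π min(a, l·|cos φ|) dφ` -/
noncomputable def A2 (l a : ℝ) : ℝ := ∫ φ in (0:ℝ)..π, min a (l * |Real.cos φ|)

/-- `B(l,b) = ∫_0^π min(b, l·sin φ) dφ` -/
noncomputable def B2 (l b : ℝ) : ℝ := ∫ φ in (0:ℝ)..π, min b (l * Real.sin φ)

/-- `AB(l,a,b) = ∫_0^π min(a, l·|cos φ|)·min(b, l·sin φ) dφ` -/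
noncomputable def AB2 (l a b : ℝ) : ℝ :=
  ∫ φ in (0:ℝ)..π, min a (l * |Real.cos φ|) * min b (l * Real.sin φ)

/-- Intersection probability for the 2D Buffon–Laplace needle problem. -/
noncomputable def P2 (l a b : ℝ) : ℝ :=
  (b * A2 l a + a * B2 l b - AB2 l a b) / (π * a * b)

/-- Intersection probability for the 2D spherocylinder Buffon–Laplace problem. -/
noncomputable def P2sc (l σ a b : ℝ) : ℝ :=
  ((b - σ) * A2 l (a - σ) + (a - σ) * B2 l (b - σ) - AB2 l (a - σ) (b - σ)
    + (σ * a + σ * b - σ ^ 2) * π) / (π * a * b)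

/-- `A³ᴰ(l,a) = ∫_0^{π/2} ∫_0^π min(a, l·sin ψ·|cos φ|) dφ dψ` -/
noncomputable def A3 (l a : ℝ) : ℝ :=
  ∫ ψ in (0:ℝ)..(π/2), ∫ φ in (0:ℝ)..π, min a (l * Real.sin ψ * |Real.cos φ|)

/-- `B³ᴰ(l,b) = ∫_0^{π/2} ∫_0^π min(b, l·sin ψ·sin φ) dφ dψ` -/
noncomputable def B3 (l b : ℝ) : ℝ :=
  ∫ ψ in (0:ℝ)..(π/2), ∫ φ in (0:ℝ)..π, min b (l * Real.sin ψ * Real.sin φ)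

/-- `AB³ᴰ(l,a,b) = ∫_0^{π/2} ∫_0^π min(a, l·sin ψ·|cos φ|)·min(b, l·sin ψ·sin φ) dφ dψ` -/
noncomputable def AB3 (l a b : ℝ) : ℝ :=
  ∫ ψ in (0:ℝ)..(π/2), ∫ φ in (0:ℝ)..π,
    min a (l * Real.sin ψ * |Real.cos φ|) * min b (l * Real.sin ψ * Real.sin φ)

/-- `S³ᴰ(l,a,b) = b·A³ᴰ(l,a) + a·B³ᴰ(l,b) − AB³ᴰ(l,a,b)` -/
noncomputable def S3 (l a b : ℝ) : ℝ := b * A3 l a + a * B3 l b - AB3 l a b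

/-- `F(α,β,t) = ∫_α^β √(sin²ψ − t²) dψ` -/
noncomputable def Faux (α β t : ℝ) : ℝ :=
  ∫ ψ in α..β, Real.sqrt (Real.sin ψ ^ 2 - t ^ 2)

/-- `G(α,β,t) = ∫_α^β (π/2 − arcsin(t / sin ψ)) dψ` -/
noncomputable def Gaux (α β t : ℝ) : ℝ :=
  ∫ ψ in α..β, (π / 2 - Real.arcsin (t / Real.sin ψ))

theorem stmt0 (l a : ℝ) (ha : 0 < a) (hal : a < l) :
    A2 l a = 2 * l * (1 - Real.sqrt (1 - a ^ 2 / l ^ 2)) + 2 * a * Real.arccos (a / l) := by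
  have hl : 0 < l := ha.trans hal
  have hdiv0 : 0 < a / l := div_pos ha hl
  have hdiv1 : a / l < 1 := (div_lt_one hl).mpr hal
  set c := Real.arccos (a / l) with hc
  have hc0 : 0 ≤ c := Real.arccos_nonneg _
  have hcpi2 : c ≤ π / 2 := Real.arccos_le_pi_div_two.mpr hdiv0.le
  have hcpi : c ≤ π := Real.arccos_le_pi _
  have hcos : Real.cos c = a / l := Real.cos_arccos (by linarith) (by linarith)
  have hsin : Real.sin c = Real.sqrt (1 - a ^ 2 / l ^ 2) := by
    rw [hc, Real.sin_arccos, div_pow]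
  have hpos : 0 < π := Real.pi_pos
  have hcont : Continuous fun φ : ℝ => min a (l * |Real.cos φ|) :=
    continuous_const.min (continuous_const.mul Real.continuous_cos.abs)
  have hint : ∀ u v : ℝ, IntervalIntegrable (fun φ => min a (l * |Real.cos φ|)) volume u v :=
    fun u v => hcont.intervalIntegrable u v
  have h1 : ∫ φ in (0:ℝ)..c, min a (l * |Real.cos φ|) = a * c := by
    rw [intervalIntegral.integral_congr (g := fun _ => a)]
    · simp [mul_comm]
    · intro x hx
      rw [Set.uIcc_of_le hc0] at hx
      obtain ⟨hx0, hxc⟩ := hx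
      show min a (l * |Real.cos x|) = a
      have hcx : a / l ≤ Real.cos x := by
        rw [← hcos]; exact Real.cos_le_cos_of_nonneg_of_le_pi hx0 hcpi hxc
      have hposx : 0 ≤ Real.cos x := le_trans hdiv0.le hcx
      rw [abs_of_nonneg hposx, min_eq_left]
      calc a = a / l * l := by field_simp
        _ ≤ Real.cos x * l := by nlinarith
        _ = l * Real.cos x := mul_comm _ _
  have h2 : ∫ φ in c..(π/2), min a (l * |Real.cos φ|) = l * (1 - Real.sin c) := by
    rw [intervalIntegral.integral_congr (g := fun x => l * Real.cos x)]
    · rw [intervalIntegral.integral_const_mul, integral_cos,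
        Real.sin_pi_div_two]
    · intro x hx
      rw [Set.uIcc_of_le hcpi2] at hx
      obtain ⟨hxc, hxp⟩ := hx
      show min a (l * |Real.cos x|) = l * Real.cos x
      have hposx : 0 ≤ Real.cos x := Real.cos_nonneg_of_mem_Icc ⟨by linarith, hxp⟩
      have hcx : Real.cos x ≤ a / l := by
        rw [← hcos]
        exact Real.cos_le_cos_of_nonneg_of_le_pi hc0 (by linarith) hxc
      rw [abs_of_nonneg hposx, min_eq_right]
      calc l * Real.cos x ≤ l * (a / l) := by nlinarith
        _ = a := by field_simp
  have h3 : ∫ φ in (π/2)..(π - c), min a (l * |Real.cos φ|) = l * (1 - Real.sin c) := by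
    rw [intervalIntegral.integral_congr (g := fun x => l * (-Real.cos x))]
    · rw [intervalIntegral.integral_const_mul, intervalIntegral.integral_neg,
        integral_cos, Real.sin_pi_div_two, Real.sin_pi_sub]
      ring
    · intro x hx
      rw [Set.uIcc_of_le (by linarith)] at hx
      obtain ⟨hxc, hxp⟩ := hx
      show min a (l * |Real.cos x|) = l * -Real.cos x
      have hnegx : Real.cos x ≤ 0 :=
        Real.cos_nonpos_of_pi_div_two_le_of_le hxc (by linarith)
      have hcx : Real.cos (π - c) ≤ Real.cos x :=
        Real.cos_le_cos_of_nonneg_of_le_pi (by linarith) (by linarith) hxp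
      rw [Real.cos_pi_sub, hcos] at hcx
      rw [abs_of_nonpos hnegx, min_eq_right]
      calc l * -Real.cos x ≤ l * (a / l) := by nlinarith
        _ = a := by field_simp
  have h4 : ∫ φ in (π - c)..π, min a (l * |Real.cos φ|) = a * c := by
    rw [intervalIntegral.integral_congr (g := fun _ => a)]
    · simp; ring
    · intro x hx
      rw [Set.uIcc_of_le (by linarith)] at hx
      obtain ⟨hxc, hxp⟩ := hx
      show min a (l * |Real.cos x|) = a
      have hnegx : Real.cos x ≤ 0 :=
        Real.cos_nonpos_of_pi_div_two_le_of_le (by linarith) (by linarith)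
      have hcx : Real.cos x ≤ Real.cos (π - c) :=
        Real.cos_le_cos_of_nonneg_of_le_pi (by linarith) (by linarith) hxc
      rw [Real.cos_pi_sub, hcos] at hcx
      rw [abs_of_nonpos hnegx, min_eq_left]
      calc a = a / l * l := by field_simp
        _ ≤ -Real.cos x * l := by nlinarith
        _ = l * -Real.cos x := mul_comm _ _
  have hsplit : A2 l a = (∫ φ in (0:ℝ)..c, min a (l * |Real.cos φ|))
      + (∫ φ in c..(π/2), min a (l * |Real.cos φ|))
      + (∫ φ in (π/2)..(π - c), min a (l * |Real.cos φ|))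
      + (∫ φ in (π - c)..π, min a (l * |Real.cos φ|)) := by
    rw [A2,
      intervalIntegral.integral_add_adjacent_intervals (hint 0 c) (hint c (π/2)),
      intervalIntegral.integral_add_adjacent_intervals (hint 0 (π/2)) (hint (π/2) (π - c)),
      intervalIntegral.integral_add_adjacent_intervals (hint 0 (π - c)) (hint (π - c) π)]
  rw [hsplit, h1, h2, h3, h4, hsin]; ring
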